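/- Let P be a finite poset and let O be an orbit of rowmotion on J(P). Then for every p ∈ P, the number of ideals I ∈ O with p ∈ Min(P\I) equals the number of ideals I ∈ O with p ∈ Max(I); equivalently, Σ_{I∈O} T_p(I) = 0 (the toggleability statistic T_p is 0-mesic under rowmotion). -/

import Mathlib

open scoped Classical

/-- The toggleability statistic: `1` if `p ∈ Min(P \ I)`, `-1` if `p ∈ Max I`, `0` otherwise. -/
noncomputable def tog {α : Type*} [PartialOrder α] (I : Set α) (p : α) : ℝ :=
  if p ∉ I ∧ ∀ y, y ∉ I → y ≤ p → y = p then 1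
  else if p ∈ I ∧ ∀ y ∈ I, p ≤ y → p = y then -1
  else 0

/-- Rowmotion: `I` is sent to the order ideal generated by the minimal elements of
`P \ I`. -/
def Row {α : Type*} [PartialOrder α] (I : {I : Set α // IsLowerSet I}) :
    {I : Set α // IsLowerSet I} :=
  ⟨{x | ∃ y, (y ∉ I.1 ∧ ∀ z, z ∉ I.1 → z ≤ y → z = y) ∧ x ≤ y},
    fun _ _ hba ⟨y, hy, hay⟩ => ⟨y, hy, hba.trans hay⟩⟩

/-- The toggleability statistic `T_p` is `0`-mesic under rowmotion: its sum over any
rowmotion orbit is `0`. -/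
theorem stmt_19 {α : Type*} [PartialOrder α] [Fintype α]
    (I : {I : Set α // IsLowerSet I}) (c : ℕ) (hc : 0 < c)
    (hcyc : Row^[c] I = I) (p : α) :
    ∑ k ∈ Finset.range c, tog (Row^[k] I).1 p = 0 := by
  classical
  set f : Set α → ℝ := fun J => if p ∉ J ∧ ∀ y, y ∉ J → y ≤ p → y = p then 1 else 0 with hf
  set g : Set α → ℝ := fun J => if p ∈ J ∧ ∀ y ∈ J, p ≤ y → p = y then 1 else 0 with hg
  have htog : ∀ J : Set α, tog J p = f J - g J := by
    intro J
    unfold tog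
    by_cases h1 : p ∉ J ∧ ∀ y, y ∉ J → y ≤ p → y = p
    · have h2 : ¬ (p ∈ J ∧ ∀ y ∈ J, p ≤ y → p = y) := fun h => h1.1 h.1
      simp [hf, hg, h1, h2]
    · by_cases h2 : p ∈ J ∧ ∀ y ∈ J, p ≤ y → p = y
      · simp [hf, hg, h1, h2, if_pos h2.2]
      · simp [hf, hg, h1, h2]
  have key : ∀ J : {I : Set α // IsLowerSet I}, g (Row J).1 = f J.1 := by
    intro J
    have hiff : (p ∈ (Row J).1 ∧ ∀ y ∈ (Row J).1, p ≤ y → p = y) ↔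
        (p ∉ J.1 ∧ ∀ y, y ∉ J.1 → y ≤ p → y = p) := by
      constructor
      · rintro ⟨⟨y, ⟨hyn, hymin⟩, hpy⟩, hmax⟩
        have hyRow : y ∈ (Row J).1 := ⟨y, ⟨hyn, hymin⟩, le_refl y⟩
        have hpy' : p = y := hmax y hyRow hpy
        subst hpy'
        exact ⟨hyn, hymin⟩
      · rintro ⟨hpn, hpmin⟩
        refine ⟨⟨p, ⟨hpn, hpmin⟩, le_refl p⟩, ?_⟩
        rintro x ⟨y, ⟨hyn, hymin⟩, hxy⟩ hpx
        have hpy : p = y := hymin p hpn (hpx.trans hxy)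
        exact le_antisymm hpx (hxy.trans hpy.ge)
    simp only [hf, hg]
    rw [if_congr hiff rfl rfl]
  have hshift : ∀ k, g (Row^[k+1] I).1 = f (Row^[k] I).1 := by
    intro k
    rw [Function.iterate_succ_apply', key]
  have h1 : ∑ k ∈ Finset.range (c+1), g (Row^[k] I).1
      = ∑ k ∈ Finset.range c, f (Row^[k] I).1 + g (Row^[0] I).1 := by
    rw [Finset.sum_range_succ']
    simp_rw [hshift]
  have h2 : ∑ k ∈ Finset.range (c+1), g (Row^[k] I).1
      = ∑ k ∈ Finset.range c, g (Row^[k] I).1 + g (Row^[c] I).1 :=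
    Finset.sum_range_succ _ _
  rw [hcyc] at h2
  have heq : ∑ k ∈ Finset.range c, f (Row^[k] I).1
      = ∑ k ∈ Finset.range c, g (Row^[k] I).1 := by
    have h0 : (Row^[0] I) = I := rfl
    rw [h0] at h1
    linarith [h1.symm.trans h2]
  calc ∑ k ∈ Finset.range c, tog (Row^[k] I).1 p
      = ∑ k ∈ Finset.range c, (f (Row^[k] I).1 - g (Row^[k] I).1) := by
        simp_rw [htog]
    _ = ∑ k ∈ Finset.range c, f (Row^[k] I).1
        - ∑ k ∈ Finset.range c, g (Row^[k] I).1 := Finset.sum_sub_distrib _ _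
    _ = 0 := by rw [heq, sub_self]
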